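/- arXiv:1302.6050 — 3 statements merged into one kernel-verified Lean document; each statement's English description precedes it below -/
import Mathlib

section
/- Reinforced Kolmogorov continuity criterion: Let (Ω,𝓕,ℙ) be a probability space, d ≥ 1, R > 0, and let (f_n)_{n∈ℕ} be a sequence of real-valued stochastic processes indexed by the closed ball B(0,R) ⊆ ℝ^d (i.e. for each n and each x ∈ B(0,R), ω ↦ f_n(x,ω) is measurable). Suppose there exist constants q > 0, β > 0 and C > 0 such that for all x,y ∈ B(0,R): E[ sup_n |f_n(x) − f_n(y)|^q ] ≤ C·|x−y|^{d+β}. Then for every α ∈ (0, β/q) there exist, for each n, a modification g_n of f_n (meaning that for every n and every x ∈ B(0,R), ℙ(g_n(x) = f_n(x)) = 1) and a nonnegative random variable C̃ which is ℙ-almost surely finite, such that ℙ-almost surely, for all n ∈ ℕ and all x,y ∈ B(0,R): |g_n(x) − g_n(y)| ≤ C̃·|x−y|^α. -/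
open MeasureTheory Metric Set Finset Filter
open scoped ENNReal NNReal Topology

namespace RKC

noncomputable def truncZ (s : ℝ) : ℤ := if 0 ≤ s then ⌊s⌋ else ⌈s⌉

lemma truncZ_abs_le (s : ℝ) : |(truncZ s : ℝ)| ≤ |s| := by
  unfold truncZ
  split_ifs with h
  · rw [abs_of_nonneg h, abs_of_nonneg]
    · exact_mod_cast Int.floor_le s
    · exact_mod_cast Int.floor_nonneg.2 h
  · push_neg at h
    rw [abs_of_nonpos h.le, abs_of_nonpos]
    · push_cast; linarith [Int.le_ceil s]
    · simpa using (Int.ceil_le.2 (by simpa using h.le) : ⌈s⌉ ≤ (0:ℤ))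

lemma abs_sub_truncZ_le (s : ℝ) : |s - truncZ s| ≤ 1 := by
  unfold truncZ
  split_ifs with h
  · rw [abs_of_nonneg (by linarith [Int.floor_le s])]
    linarith [Int.sub_one_lt_floor s, Int.floor_le s]
  · rw [abs_of_nonpos (by linarith [Int.le_ceil s])]
    linarith [Int.ceil_lt_add_one s, Int.le_ceil s]

noncomputable def pt (d k : ℕ) (j : Fin d → ℤ) : EuclideanSpace ℝ (Fin d) :=
  WithLp.toLp 2 (fun i => (j i : ℝ) / 2 ^ k)

noncomputable def jx (d k : ℕ) (x : EuclideanSpace ℝ (Fin d)) : Fin d → ℤ :=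
  fun i => truncZ (2 ^ k * x i)

noncomputable def tk (d k : ℕ) (x : EuclideanSpace ℝ (Fin d)) : EuclideanSpace ℝ (Fin d) :=
  pt d k (jx d k x)

lemma coord_abs_le_norm {d : ℕ} (x : EuclideanSpace ℝ (Fin d)) (i : Fin d) : |x i| ≤ ‖x‖ := by
  rw [EuclideanSpace.norm_eq, ← Real.sqrt_sq_eq_abs]
  apply Real.sqrt_le_sqrt
  have : x i ^ 2 = ‖x i‖ ^ 2 := by rw [Real.norm_eq_abs, sq_abs]
  rw [this]
  exact Finset.single_le_sum (fun j _ => sq_nonneg ‖x j‖) (Finset.mem_univ i)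

lemma norm_le_sqrt_mul {d : ℕ} (x : EuclideanSpace ℝ (Fin d)) {c : ℝ} (hc : 0 ≤ c)
    (h : ∀ i, |x i| ≤ c) : ‖x‖ ≤ Real.sqrt d * c := by
  rw [EuclideanSpace.norm_eq]
  have : ∑ i, ‖x i‖ ^ 2 ≤ ∑ _i : Fin d, c ^ 2 := by
    apply Finset.sum_le_sum
    intro i _
    rw [Real.norm_eq_abs]
    exact pow_le_pow_left₀ (abs_nonneg _) (h i) 2
  calc Real.sqrt (∑ i, ‖x i‖ ^ 2) ≤ Real.sqrt (∑ _i : Fin d, c ^ 2) := Real.sqrt_le_sqrt this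
    _ = Real.sqrt (d * c ^ 2) := by rw [Finset.sum_const, Finset.card_univ, Fintype.card_fin,
        nsmul_eq_mul]
    _ = Real.sqrt d * c := by
        rw [Real.sqrt_mul (by positivity), Real.sqrt_sq hc]

lemma norm_le_norm_of_coords {d : ℕ} (x y : EuclideanSpace ℝ (Fin d))
    (h : ∀ i, |x i| ≤ |y i|) : ‖x‖ ≤ ‖y‖ := by
  rw [EuclideanSpace.norm_eq, EuclideanSpace.norm_eq]
  apply Real.sqrt_le_sqrt
  apply Finset.sum_le_sum
  intro i _
  rw [Real.norm_eq_abs, Real.norm_eq_abs]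
  exact pow_le_pow_left₀ (abs_nonneg _) (h i) 2

lemma tk_coord_abs_le {d k : ℕ} (x : EuclideanSpace ℝ (Fin d)) (i : Fin d) :
    |tk d k x i| ≤ |x i| := by
  show |(truncZ (2 ^ k * x i) : ℝ) / 2 ^ k| ≤ |x i|
  rw [abs_div, abs_of_pos (by positivity : (0:ℝ) < 2 ^ k), div_le_iff₀ (by positivity)]
  calc |(truncZ (2 ^ k * x i) : ℝ)| ≤ |2 ^ k * x i| := truncZ_abs_le _
    _ = |x i| * 2 ^ k := by rw [abs_mul, abs_of_pos (by positivity : (0:ℝ) < 2 ^ k)]; ring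

lemma tk_mem_ball {d k : ℕ} {R : ℝ} {x : EuclideanSpace ℝ (Fin d)}
    (hx : x ∈ closedBall (0 : EuclideanSpace ℝ (Fin d)) R) :
    tk d k x ∈ closedBall (0 : EuclideanSpace ℝ (Fin d)) R := by
  rw [mem_closedBall, dist_zero_right] at *
  exact le_trans (norm_le_norm_of_coords _ _ (tk_coord_abs_le x)) hx

lemma abs_sub_tk_coord {d k : ℕ} (x : EuclideanSpace ℝ (Fin d)) (i : Fin d) :
    |x i - tk d k x i| ≤ 1 / 2 ^ k := by
  show |x i - (truncZ (2 ^ k * x i) : ℝ) / 2 ^ k| ≤ 1 / 2 ^ k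
  rw [le_div_iff₀ (by positivity : (0:ℝ) < 2 ^ k)]
  calc |x i - (truncZ (2 ^ k * x i) : ℝ) / 2 ^ k| * 2 ^ k
      = |2 ^ k * x i - (truncZ (2 ^ k * x i) : ℝ)| := by
        rw [← abs_of_pos (by positivity : (0:ℝ) < 2 ^ k), ← abs_mul]
        congr 1; simp only [abs_pow, abs_two]
        rw [sub_mul, div_mul_cancel₀ _ (by positivity : (2:ℝ) ^ k ≠ 0)]; ring
    _ ≤ 1 := abs_sub_truncZ_le _

lemma norm_sub_tk_le {d k : ℕ} (x : EuclideanSpace ℝ (Fin d)) :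
    ‖x - tk d k x‖ ≤ Real.sqrt d / 2 ^ k := by
  rw [div_eq_mul_one_div]
  exact norm_le_sqrt_mul _ (by positivity) (fun i => abs_sub_tk_coord x i)


lemma lintegral_iSup_finset_le {Ω ι : Type*} [MeasurableSpace Ω] (ℙ : Measure Ω)
    (s : Finset ι) (g : ι → Ω → ℝ≥0∞) (hg : ∀ i, AEMeasurable (g i) ℙ) (bnd : ℝ≥0∞)
    (hbnd : ∀ i ∈ s, ∫⁻ ω, g i ω ∂ℙ ≤ bnd) :
    ∫⁻ ω, ⨆ i : s, g i ω ∂ℙ ≤ s.card * bnd := by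
  have h1 : ∫⁻ ω, ⨆ i : s, g i ω ∂ℙ ≤ ∫⁻ ω, ∑' i : s, g i ω ∂ℙ := by
    apply lintegral_mono
    intro ω
    exact iSup_le fun i => ENNReal.le_tsum i
  have h2 : ∫⁻ ω, ∑' i : s, g i ω ∂ℙ = ∑' i : s, ∫⁻ ω, g i ω ∂ℙ :=
    lintegral_tsum fun i => hg i
  rw [h2] at h1
  refine h1.trans ?_
  rw [tsum_fintype]
  calc ∑ i : s, ∫⁻ ω, g i ω ∂ℙ ≤ (Finset.univ : Finset s).card • bnd :=
        Finset.sum_le_card_nsmul _ _ _ (fun i _ => hbnd i i.2)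
    _ = s.card * bnd := by rw [Finset.card_univ, Fintype.card_coe, nsmul_eq_mul]

lemma box_card_le (d : ℕ) (a : ℕ) :
    ((Fintype.piFinset fun _ : Fin d => Finset.Icc (-(a:ℤ)) a).card : ℝ) ≤ (2*(a:ℝ)+1)^d := by
  rw [Fintype.card_piFinset]
  push_cast
  rw [Finset.prod_const, Finset.card_univ, Fintype.card_fin]
  apply pow_le_pow_left₀ (by positivity)
  rw [Int.card_Icc]
  have : ((a:ℤ) + 1 - -(a:ℤ)).toNat = 2*a+1 := by omega
  rw [this]
  push_cast; linarith


end RKC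

open RKC

set_option maxHeartbeats 2000000 in
/-- **Reinforced Kolmogorov continuity criterion.**
Let `(Ω, 𝓕, ℙ)` be a probability space and `(f n)` a sequence of real-valued stochastic
processes indexed by the closed ball `B(0,R) ⊆ ℝ^d`. If for some `q, β, C > 0` one has
`E[sup_n |f n x - f n y|^q] ≤ C * |x - y|^(d + β)` for all `x, y` in the ball, then for
every `α ∈ (0, β/q)` there are modifications `g n` of the `f n` and a nonnegative
(a.s. finite) random variable `C'` such that, almost surely,
`|g n x - g n y| ≤ C' * |x - y|^α` for all `n` and all `x, y` in the ball. -/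
theorem reinforced_kolmogorov_continuity
    {Ω : Type*} [MeasurableSpace Ω] (ℙ : Measure Ω) [IsProbabilityMeasure ℙ]
    (d : ℕ) (hd : 1 ≤ d) (R : ℝ) (hR : 0 < R)
    (f : ℕ → EuclideanSpace ℝ (Fin d) → Ω → ℝ)
    (hmeas : ∀ n, ∀ x ∈ closedBall (0 : EuclideanSpace ℝ (Fin d)) R, Measurable (f n x))
    (q β C : ℝ) (hq : 0 < q) (hβ : 0 < β) (hC : 0 < C)
    (hbound : ∀ x ∈ closedBall (0 : EuclideanSpace ℝ (Fin d)) R,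
      ∀ y ∈ closedBall (0 : EuclideanSpace ℝ (Fin d)) R,
        ∫⁻ ω, ⨆ n, ENNReal.ofReal (|f n x ω - f n y ω| ^ q) ∂ℙ
          ≤ ENNReal.ofReal (C * ‖x - y‖ ^ ((d : ℝ) + β))) :
    ∀ α : ℝ, 0 < α → α < β / q →
      ∃ g : ℕ → EuclideanSpace ℝ (Fin d) → Ω → ℝ, ∃ C' : Ω → ℝ,
        (∀ n, ∀ x ∈ closedBall (0 : EuclideanSpace ℝ (Fin d)) R,
            ℙ {ω | g n x ω = f n x ω} = 1) ∧
        Measurable C' ∧ (∀ ω, 0 ≤ C' ω) ∧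
        (∀ᵐ ω ∂ℙ, ∀ n, ∀ x ∈ closedBall (0 : EuclideanSpace ℝ (Fin d)) R,
            ∀ y ∈ closedBall (0 : EuclideanSpace ℝ (Fin d)) R,
              |g n x ω - g n y ω| ≤ C' ω * ‖x - y‖ ^ α) := by
  intro α hα hαβq
  classical
  set Ball := closedBall (0 : EuclideanSpace ℝ (Fin d)) R with hBall
  -- basic constants
  set D : ℝ := Real.sqrt d with hDdef
  have hD1 : 1 ≤ D := Real.one_le_sqrt.2 (by exact_mod_cast hd)
  have hD0 : 0 < D := lt_of_lt_of_le one_pos hD1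
  set N : ℕ := ⌈2*R + 3*D⌉₊ with hNdef
  have hNge : 2*R + 3*D ≤ N := Nat.le_ceil _
  have hN3 : (3:ℝ) ≤ N := by nlinarith
  have hN0 : (0:ℝ) < N := by linarith
  have hαq : α * q < β := (lt_div_iff₀ hq).1 hαβq
  -- geometric ratios
  set a : ℝ := (2:ℝ) ^ (-α) with hadef
  have ha0 : 0 < a := Real.rpow_pos_of_pos two_pos _
  have ha1 : a < 1 := Real.rpow_lt_one_of_one_lt_of_neg one_lt_two (by linarith)
  set s : ℝ := (2:ℝ) ^ (-(α*q)) with hsdef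
  have hs0 : 0 < s := Real.rpow_pos_of_pos two_pos _
  set b : ℝ := (2:ℝ) ^ (-β) with hbdef
  have hb0 : 0 < b := Real.rpow_pos_of_pos two_pos _
  have hbs : b / s < 1 := by
    rw [hbdef, hsdef, ← Real.rpow_sub two_pos]
    exact Real.rpow_lt_one_of_one_lt_of_neg one_lt_two (by linarith)
  have hbs0 : 0 < b / s := div_pos hb0 hs0
  have hsk : ∀ k : ℕ, (s ^ k) ^ q⁻¹ = a ^ k := by
    intro k
    have h1 : s ^ k = (2:ℝ) ^ (-(α*q) * k) := by
      rw [hsdef, ← Real.rpow_natCast ((2:ℝ) ^ (-(α*q))) k, ← Real.rpow_mul (by norm_num)]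
    have h2 : a ^ k = (2:ℝ) ^ (-α * k) := by
      rw [hadef, ← Real.rpow_natCast ((2:ℝ) ^ (-α)) k, ← Real.rpow_mul (by norm_num)]
    rw [h1, h2, ← Real.rpow_mul (by norm_num)]
    congr 1
    field_simp [hq.ne']
  -- the sup-process M
  set M : EuclideanSpace ℝ (Fin d) → EuclideanSpace ℝ (Fin d) → Ω → ℝ≥0∞ :=
    fun u v ω => ⨆ n, ENNReal.ofReal (|f n u ω - f n v ω| ^ q) with hMdef
  have hMmeas : ∀ u ∈ Ball, ∀ v ∈ Ball, Measurable (M u v) := by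
    intro u hu v hv
    refine Measurable.iSup fun n => Measurable.ennreal_ofReal ?_
    exact (((hmeas n u hu).sub (hmeas n v hv)).abs).pow_const q
  -- index boxes
  set Bx : ℕ → Finset ((Fin d → ℤ) × (Fin d → ℤ)) :=
    fun k => (Fintype.piFinset fun _ => Finset.Icc (-(⌈2^k*R⌉₊:ℤ)) (⌈2^k*R⌉₊:ℤ)) ×ˢ
             (Fintype.piFinset fun _ => Finset.Icc (-(N:ℤ)) (N:ℤ)) with hBxdef
  set pr : ℕ → (Fin d → ℤ) × (Fin d → ℤ) → Ω → ℝ≥0∞ := fun k p ω =>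
    if pt d k p.1 ∈ Ball ∧ pt d k (p.1 + p.2) ∈ Ball then
      M (pt d k p.1) (pt d k (p.1 + p.2)) ω else 0 with hprdef
  set Y : ℕ → Ω → ℝ≥0∞ := fun k ω => ⨆ p : Bx k, pr k p ω with hYdef
  set Z : Ω → ℝ≥0∞ := fun ω => ⨆ k, (ENNReal.ofReal (s ^ k))⁻¹ * Y k ω with hZdef
  have hprmeas : ∀ k p, Measurable (pr k p) := by
    intro k p
    by_cases hc : pt d k p.1 ∈ Ball ∧ pt d k (p.1 + p.2) ∈ Ball
    · simpa only [hprdef, if_pos hc] using hMmeas _ hc.1 _ hc.2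
    · simpa only [hprdef, if_neg hc] using measurable_const
  have hYmeas : ∀ k, Measurable (Y k) := fun k => Measurable.iSup fun p => hprmeas k p
  have hZmeas : Measurable Z :=
    Measurable.iSup fun k => ((hYmeas k).const_mul _)
  -- distance between paired grid points
  have hptdist : ∀ k (p : (Fin d → ℤ) × (Fin d → ℤ)), p ∈ Bx k →
      ‖pt d k p.1 - pt d k (p.1 + p.2)‖ ≤ D * N / 2 ^ k := by
    intro k p hp
    rw [hBxdef, Finset.mem_product] at hp
    have h2 := hp.2
    rw [Fintype.mem_piFinset] at h2
    rw [mul_div_assoc]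
    apply norm_le_sqrt_mul _ (by positivity)
    intro i
    have hi := h2 i
    rw [Finset.mem_Icc] at hi
    have : (pt d k p.1 - pt d k (p.1 + p.2)) i = -((p.2 i : ℝ) / 2 ^ k) := by
      show (p.1 i : ℝ)/2^k - ((p.1 i + p.2 i : ℤ) : ℝ)/2^k = -((p.2 i : ℝ) / 2 ^ k)
      push_cast
      ring
    rw [this, abs_neg, abs_div, abs_of_pos (by positivity : (0:ℝ) < 2^k)]
    apply div_le_div_of_nonneg_right ?_ (by positivity)
    rw [← Int.cast_abs]
    have : |p.2 i| ≤ (N:ℤ) := abs_le.2 hi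
    have h' := (Int.cast_le (R := ℝ)).2 this
    simpa using h'
  -- integral bound for each pair
  have hpr_int : ∀ k p, p ∈ Bx k →
      ∫⁻ ω, pr k p ω ∂ℙ ≤ ENNReal.ofReal (C * (D*N/2^k) ^ ((d:ℝ)+β)) := by
    intro k p hp
    by_cases hc : pt d k p.1 ∈ Ball ∧ pt d k (p.1 + p.2) ∈ Ball
    · simp only [hprdef, if_pos hc]
      refine (hbound _ hc.1 _ hc.2).trans (ENNReal.ofReal_le_ofReal ?_)
      apply mul_le_mul_of_nonneg_left _ hC.le
      exact Real.rpow_le_rpow (norm_nonneg _) (hptdist k p hp) (by positivity)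
    · simp only [hprdef, if_neg hc, lintegral_zero]
      exact zero_le
  -- integral bound for Y
  set A : ℝ := (2*R+3)^d * (2*(N:ℝ)+1)^d * (C * (D*(N:ℝ)) ^ ((d:ℝ)+β)) with hAdef
  have hA0 : 0 < A := by positivity
  have hY_int : ∀ k, ∫⁻ ω, Y k ω ∂ℙ ≤ ENNReal.ofReal (A * b ^ k) := by
    intro k
    have step1 : ∫⁻ ω, Y k ω ∂ℙ ≤
        (Bx k).card * ENNReal.ofReal (C * (D*N/2^k) ^ ((d:ℝ)+β)) :=
      lintegral_iSup_finset_le ℙ (Bx k) (pr k) (fun p => (hprmeas k p).aemeasurable) _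
        (fun p hp => hpr_int k p hp)
    refine step1.trans ?_
    rw [← ENNReal.ofReal_natCast, ← ENNReal.ofReal_mul (Nat.cast_nonneg _)]
    apply ENNReal.ofReal_le_ofReal
    have hcard : ((Bx k).card : ℝ) ≤ 2^(k*d) * ((2*R+3)^d * (2*(N:ℝ)+1)^d) := by
      rw [hBxdef, Finset.card_product]
      push_cast
      have hb1 := box_card_le d ⌈2^k*R⌉₊
      have hb2 := box_card_le d N
      calc ((Fintype.piFinset fun _ : Fin d => Finset.Icc (-(⌈2^k*R⌉₊:ℤ)) (⌈2^k*R⌉₊:ℤ)).card : ℝ) *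
            ((Fintype.piFinset fun _ : Fin d => Finset.Icc (-(N:ℤ)) (N:ℤ)).card : ℝ)
          ≤ (2*(⌈2^k*R⌉₊:ℝ)+1)^d * (2*(N:ℝ)+1)^d := by
            exact mul_le_mul hb1 hb2 (Nat.cast_nonneg _) (by positivity)
        _ ≤ (2^k*(2*R+3))^d * (2*(N:ℝ)+1)^d := by
            apply mul_le_mul_of_nonneg_right _ (by positivity)
            apply pow_le_pow_left₀ (by positivity)
            have hceil : (⌈2^k*R⌉₊:ℝ) ≤ 2^k*R + 1 := (Nat.ceil_lt_add_one (by positivity)).le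
            have h2k : (1:ℝ) ≤ 2^k := one_le_pow₀ (by norm_num)
            nlinarith
        _ = 2^(k*d) * ((2*R+3)^d * (2*(N:ℝ)+1)^d) := by
            rw [mul_pow, ← pow_mul]; ring
    have e1 : ((D*(N:ℝ)/2^k))^((d:ℝ)+β)
        = (D*(N:ℝ))^((d:ℝ)+β) * ((2:ℝ)^k)^(-((d:ℝ)+β)) := by
      rw [div_eq_mul_inv, Real.mul_rpow (by positivity) (by positivity),
        Real.inv_rpow (by positivity), ← Real.rpow_neg (by positivity)]
    have h2k : (2:ℝ)^(k*d) * ((2:ℝ)^k)^(-((d:ℝ)+β)) = b^k := by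
      rw [hbdef, ← Real.rpow_natCast ((2:ℝ)^(-β)) k, ← Real.rpow_mul (by norm_num),
        ← Real.rpow_natCast (2:ℝ) (k*d), ← Real.rpow_natCast (2:ℝ) k,
        ← Real.rpow_mul (by norm_num), ← Real.rpow_add two_pos]
      congr 1
      push_cast
      ring
    calc ((Bx k).card : ℝ) * (C * (D*N/2^k) ^ ((d:ℝ)+β))
        ≤ (2^(k*d) * ((2*R+3)^d * (2*(N:ℝ)+1)^d)) * (C * (D*N/2^k) ^ ((d:ℝ)+β)) := by
          apply mul_le_mul_of_nonneg_right hcard (by positivity)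
      _ = A * b^k := by rw [e1, hAdef, ← h2k]; ring
  have hZ_int : ∫⁻ ω, Z ω ∂ℙ ≠ ⊤ := by
    have h1 : ∫⁻ ω, Z ω ∂ℙ ≤ ∑' k, (ENNReal.ofReal (s^k))⁻¹ * ∫⁻ ω, Y k ω ∂ℙ := by
      calc ∫⁻ ω, Z ω ∂ℙ ≤ ∫⁻ ω, ∑' k, (ENNReal.ofReal (s^k))⁻¹ * Y k ω ∂ℙ :=
            lintegral_mono fun ω => iSup_le fun k => ENNReal.le_tsum k
        _ = ∑' k, ∫⁻ ω, (ENNReal.ofReal (s^k))⁻¹ * Y k ω ∂ℙ :=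
            lintegral_tsum fun k => ((hYmeas k).const_mul _).aemeasurable
        _ = ∑' k, (ENNReal.ofReal (s^k))⁻¹ * ∫⁻ ω, Y k ω ∂ℙ := by
            refine tsum_congr fun k => lintegral_const_mul' _ _ ?_
            exact ENNReal.inv_ne_top.2 (ENNReal.ofReal_pos.2 (pow_pos hs0 k)).ne'
    have h2 : ∑' k, (ENNReal.ofReal (s^k))⁻¹ * ∫⁻ ω, Y k ω ∂ℙ
        ≤ ∑' k, ENNReal.ofReal A * (ENNReal.ofReal (b/s))^k := by
      refine ENNReal.tsum_le_tsum fun k => ?_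
      calc (ENNReal.ofReal (s^k))⁻¹ * ∫⁻ ω, Y k ω ∂ℙ
          ≤ (ENNReal.ofReal (s^k))⁻¹ * ENNReal.ofReal (A * b^k) := mul_le_mul_right (hY_int k) _
        _ = ENNReal.ofReal (A * b^k) / ENNReal.ofReal (s^k) := by rw [div_eq_mul_inv, mul_comm]
        _ = ENNReal.ofReal (A * b^k / s^k) := (ENNReal.ofReal_div_of_pos (pow_pos hs0 k)).symm
        _ = ENNReal.ofReal A * (ENNReal.ofReal (b/s))^k := by
            rw [mul_div_assoc, ← div_pow, ENNReal.ofReal_mul hA0.le, ENNReal.ofReal_pow hbs0.le]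
    rw [ENNReal.tsum_mul_left, ENNReal.tsum_geometric] at h2
    refine ne_top_of_le_ne_top ?_ (h1.trans h2)
    apply ENNReal.mul_ne_top ENNReal.ofReal_ne_top
    rw [Ne, ENNReal.inv_eq_top, tsub_eq_zero_iff_le]
    exact fun h => absurd (lt_of_lt_of_le (ENNReal.ofReal_lt_one.2 hbs) h) (lt_irrefl _)
  have hZae : ∀ᵐ ω ∂ℙ, Z ω < ⊤ := ae_lt_top hZmeas hZ_int
  -- pointwise pair bound on the good set
  have hpairbd : ∀ ω, Z ω ≠ ⊤ → ∀ (k : ℕ) (p : (Fin d → ℤ) × (Fin d → ℤ)), p ∈ Bx k →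
      pt d k p.1 ∈ Ball → pt d k (p.1 + p.2) ∈ Ball → ∀ n,
      |f n (pt d k p.1) ω - f n (pt d k (p.1 + p.2)) ω| ≤ (Z ω).toReal ^ q⁻¹ * a ^ k := by
    intro ω hω k p hp h1 h2 n
    have h3 : ENNReal.ofReal (|f n (pt d k p.1) ω - f n (pt d k (p.1 + p.2)) ω| ^ q)
        ≤ M (pt d k p.1) (pt d k (p.1 + p.2)) ω :=
      le_iSup (fun n => ENNReal.ofReal (|f n (pt d k p.1) ω - f n (pt d k (p.1 + p.2)) ω| ^ q)) n
    have h4 : M (pt d k p.1) (pt d k (p.1 + p.2)) ω ≤ Y k ω := by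
      have heq : pr k p ω = M (pt d k p.1) (pt d k (p.1 + p.2)) ω := if_pos ⟨h1, h2⟩
      have hle := le_iSup (fun p : Bx k => pr k (p : (Fin d → ℤ) × (Fin d → ℤ)) ω)
        (⟨p, hp⟩ : Bx k)
      rw [heq] at hle
      exact hle
    have h5 : Y k ω ≤ ENNReal.ofReal (s^k) * Z ω := by
      have hle : (ENNReal.ofReal (s^k))⁻¹ * Y k ω ≤ Z ω :=
        le_iSup (fun k => (ENNReal.ofReal (s^k))⁻¹ * Y k ω) k
      have hne0 : ENNReal.ofReal (s^k) ≠ 0 := (ENNReal.ofReal_pos.2 (pow_pos hs0 k)).ne'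
      calc Y k ω = ENNReal.ofReal (s^k) * ((ENNReal.ofReal (s^k))⁻¹ * Y k ω) := by
            rw [← mul_assoc, ENNReal.mul_inv_cancel hne0 ENNReal.ofReal_ne_top, one_mul]
        _ ≤ _ := mul_le_mul_right hle _
    have h6 : |f n (pt d k p.1) ω - f n (pt d k (p.1 + p.2)) ω| ^ q ≤ s^k * (Z ω).toReal := by
      have h7 := (h3.trans h4).trans h5
      have hne : ENNReal.ofReal (s^k) * Z ω ≠ ⊤ := ENNReal.mul_ne_top ENNReal.ofReal_ne_top hω
      rw [ENNReal.ofReal_le_iff_le_toReal hne] at h7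
      rwa [ENNReal.toReal_mul, ENNReal.toReal_ofReal (by positivity)] at h7
    calc |f n (pt d k p.1) ω - f n (pt d k (p.1 + p.2)) ω|
        = (|f n (pt d k p.1) ω - f n (pt d k (p.1 + p.2)) ω| ^ q) ^ q⁻¹ := by
          rw [← Real.rpow_mul (abs_nonneg _), mul_inv_cancel₀ hq.ne', Real.rpow_one]
      _ ≤ (s^k * (Z ω).toReal) ^ q⁻¹ :=
          Real.rpow_le_rpow (Real.rpow_nonneg (abs_nonneg _) _) h6 (by positivity)
      _ = (Z ω).toReal ^ q⁻¹ * a ^ k := by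
          rw [Real.mul_rpow (by positivity) ENNReal.toReal_nonneg, hsk k, mul_comm]
  -- grid membership of the approximations
  have hjx_mem : ∀ (k:ℕ), ∀ x ∈ Ball,
      jx d k x ∈ (Fintype.piFinset fun _ : Fin d => Finset.Icc (-(⌈2^k*R⌉₊:ℤ)) (⌈2^k*R⌉₊:ℤ)) := by
    intro k x hx
    rw [Fintype.mem_piFinset]
    intro i
    rw [Finset.mem_Icc, ← abs_le]
    have h1 : |(jx d k x i : ℝ)| ≤ 2^k * R := by
      refine (truncZ_abs_le _).trans ?_
      rw [abs_mul, abs_of_pos (by positivity : (0:ℝ) < 2^k)]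
      apply mul_le_mul_of_nonneg_left _ (by positivity)
      have hx' : ‖x‖ ≤ R := by rwa [hBall, mem_closedBall, dist_zero_right] at hx
      exact (coord_abs_le_norm x i).trans hx'
    have h2 : (2:ℝ)^k * R ≤ ((⌈2^k*R⌉₊:ℤ):ℝ) := by
      push_cast
      exact Nat.le_ceil _
    have := h1.trans h2
    rw [← Int.cast_abs] at this
    exact_mod_cast this
  -- increment bound
  have hInc : ∀ ω, Z ω ≠ ⊤ → ∀ n, ∀ x ∈ Ball, ∀ k : ℕ,
      |f n (tk d (k+1) x) ω - f n (tk d k x) ω| ≤ (Z ω).toReal ^ q⁻¹ * a ^ (k+1) := by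
    intro ω hω n x hx k
    set p : (Fin d → ℤ) × (Fin d → ℤ) :=
      (jx d (k+1) x, fun i => 2 * jx d k x i - jx d (k+1) x i) with hpdef
    have e1 : pt d (k+1) p.1 = tk d (k+1) x := rfl
    have e2 : pt d (k+1) (p.1 + p.2) = tk d k x := by
      ext i
      show ((jx d (k+1) x i + (2 * jx d k x i - jx d (k+1) x i) : ℤ) : ℝ) / 2^(k+1)
        = (jx d k x i : ℝ) / 2^k
      push_cast
      field_simp
      ring
    have hdiff : ∀ i, |(2 * jx d k x i - jx d (k+1) x i : ℝ)| ≤ 3 := by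
      intro i
      have h1 := abs_sub_tk_coord (k := k) x i
      have h2 := abs_sub_tk_coord (k := k+1) x i
      have e3 : (jx d k x i : ℝ) = 2^k * tk d k x i := by
        show _ = (2:ℝ)^k * ((jx d k x i : ℝ) / 2^k)
        field_simp
      have e4 : (jx d (k+1) x i : ℝ) = 2^(k+1) * tk d (k+1) x i := by
        show _ = (2:ℝ)^(k+1) * ((jx d (k+1) x i : ℝ) / 2^(k+1))
        field_simp
      rw [e3, e4]
      have e5 : 2*((2:ℝ)^k * tk d k x i) - 2^(k+1) * tk d (k+1) x i
          = 2^(k+1) * ((tk d k x i - x i) + (x i - tk d (k+1) x i)) := by ring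
      rw [e5, abs_mul, abs_of_pos (by positivity : (0:ℝ) < 2^(k+1))]
      have h6 : |(tk d k x i - x i) + (x i - tk d (k+1) x i)| ≤ 1/2^k + 1/2^(k+1) := by
        refine (abs_add_le _ _).trans ?_
        rw [abs_sub_comm]
        exact add_le_add h1 h2
      calc (2:ℝ)^(k+1) * |(tk d k x i - x i) + (x i - tk d (k+1) x i)|
          ≤ 2^(k+1) * (1/2^k + 1/2^(k+1)) := by
            exact mul_le_mul_of_nonneg_left h6 (by positivity)
        _ = 3 := by field_simp; ring
    have hp2 : p ∈ Bx (k+1) := by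
      rw [hBxdef, Finset.mem_product]
      refine ⟨hjx_mem (k+1) x hx, ?_⟩
      rw [Fintype.mem_piFinset]
      intro i
      rw [Finset.mem_Icc, ← abs_le]
      have h7 := (hdiff i).trans hN3
      have h8 : |((2 * jx d k x i - jx d (k+1) x i : ℤ) : ℝ)| ≤ (N:ℝ) := by
        push_cast
        exact h7
      exact_mod_cast h8
    have := hpairbd ω hω (k+1) p hp2 (e1 ▸ tk_mem_ball hx) (e2 ▸ tk_mem_ball hx) n
    rwa [e1, e2] at this
  -- cross bound
  have hCross : ∀ ω, Z ω ≠ ⊤ → ∀ n, ∀ x ∈ Ball, ∀ y ∈ Ball, ∀ m : ℕ,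
      (2:ℝ) + 2^m * ‖x - y‖ ≤ N →
      |f n (tk d m x) ω - f n (tk d m y) ω| ≤ (Z ω).toReal ^ q⁻¹ * a ^ m := by
    intro ω hω n x hx y hy m hm
    set p : (Fin d → ℤ) × (Fin d → ℤ) :=
      (jx d m x, fun i => jx d m y i - jx d m x i) with hpdef
    have e1 : pt d m p.1 = tk d m x := rfl
    have e2 : pt d m (p.1 + p.2) = tk d m y := by
      ext i
      show ((jx d m x i + (jx d m y i - jx d m x i) : ℤ) : ℝ) / 2^m = (jx d m y i : ℝ) / 2^m
      push_cast
      ring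
    have hdiff : ∀ i, |(jx d m y i - jx d m x i : ℝ)| ≤ (N:ℝ) := by
      intro i
      have h1 := abs_sub_tk_coord (k := m) x i
      have h2 := abs_sub_tk_coord (k := m) y i
      have hxy : |x i - y i| ≤ ‖x - y‖ := coord_abs_le_norm (x - y) i
      have e3 : (jx d m x i : ℝ) = 2^m * tk d m x i := by
        show _ = (2:ℝ)^m * ((jx d m x i : ℝ) / 2^m)
        field_simp
      have e4 : (jx d m y i : ℝ) = 2^m * tk d m y i := by
        show _ = (2:ℝ)^m * ((jx d m y i : ℝ) / 2^m)
        field_simp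
      rw [e3, e4]
      have e5 : (2:ℝ)^m * tk d m y i - 2^m * tk d m x i
          = 2^m * ((tk d m y i - y i) + (y i - x i) + (x i - tk d m x i)) := by ring
      rw [e5, abs_mul, abs_of_pos (by positivity : (0:ℝ) < 2^m)]
      have h6 : |(tk d m y i - y i) + (y i - x i) + (x i - tk d m x i)|
          ≤ 1/2^m + ‖x - y‖ + 1/2^m := by
        refine ((abs_add_le _ _).trans (add_le_add (abs_add_le _ _) le_rfl)).trans ?_
        rw [abs_sub_comm (tk d m y i)]
        refine add_le_add (add_le_add h2 ?_) h1
        rw [abs_sub_comm]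
        exact hxy
      calc (2:ℝ)^m * |(tk d m y i - y i) + (y i - x i) + (x i - tk d m x i)|
          ≤ 2^m * (1/2^m + ‖x - y‖ + 1/2^m) := mul_le_mul_of_nonneg_left h6 (by positivity)
        _ = 2 + 2^m * ‖x - y‖ := by field_simp; ring
        _ ≤ (N:ℝ) := hm
    have hp2 : p ∈ Bx m := by
      rw [hBxdef, Finset.mem_product]
      refine ⟨hjx_mem m x hx, ?_⟩
      rw [Fintype.mem_piFinset]
      intro i
      rw [Finset.mem_Icc, ← abs_le]
      have h7 := hdiff i
      have h8 : |((jx d m y i - jx d m x i : ℤ) : ℝ)| ≤ (N:ℝ) := by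
        push_cast
        exact h7
      exact_mod_cast h8
    have := hpairbd ω hω m p hp2 (e1 ▸ tk_mem_ball hx) (e2 ▸ tk_mem_ball hy) n
    rwa [e1, e2] at this
  -- the modification
  set g : ℕ → EuclideanSpace ℝ (Fin d) → Ω → ℝ := fun n x ω =>
    limUnder atTop (fun k => f n (tk d k x) ω) with hgdef
  have htendsto : ∀ ω, Z ω ≠ ⊤ → ∀ n, ∀ x ∈ Ball,
      Tendsto (fun k => f n (tk d k x) ω) atTop (𝓝 (g n x ω)) := by
    intro ω hω n x hx
    apply tendsto_nhds_limUnder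
    refine cauchySeq_tendsto_of_complete (cauchySeq_of_le_geometric a
      ((Z ω).toReal ^ q⁻¹ * a) ha1 fun k => ?_)
    rw [Real.dist_eq]
    have h := hInc ω hω n x hx k
    rw [abs_sub_comm] at h
    calc |f n (tk d k x) ω - f n (tk d (k+1) x) ω| ≤ (Z ω).toReal ^ q⁻¹ * a ^ (k+1) := h
      _ = (Z ω).toReal ^ q⁻¹ * a * a ^ k := by ring
  have hlim : ∀ ω, (hZ : Z ω ≠ ⊤) → ∀ n, ∀ x ∈ Ball, ∀ m : ℕ,
      dist (f n (tk d m x) ω) (g n x ω) ≤ ((Z ω).toReal ^ q⁻¹ * (a/(1-a))) * a ^ m := by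
    intro ω hω n x hx m
    have h1a : (0:ℝ) < 1 - a := by linarith
    have hsum : Summable (fun k : ℕ => ((Z ω).toReal ^ q⁻¹ * a) * a ^ k) :=
      (summable_geometric_of_lt_one ha0.le ha1).mul_left _
    have hdk : ∀ k : ℕ, dist (f n (tk d k x) ω) (f n (tk d (k+1) x) ω)
        ≤ ((Z ω).toReal ^ q⁻¹ * a) * a ^ k := by
      intro k
      rw [Real.dist_eq, abs_sub_comm]
      calc |f n (tk d (k+1) x) ω - f n (tk d k x) ω| ≤ (Z ω).toReal ^ q⁻¹ * a ^ (k+1) :=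
            hInc ω hω n x hx k
        _ = ((Z ω).toReal ^ q⁻¹ * a) * a ^ k := by ring
    have hto := dist_le_tsum_of_dist_le_of_tendsto _ hdk hsum (htendsto ω hω n x hx) m
    have e1 : ∀ j : ℕ, ((Z ω).toReal ^ q⁻¹ * a) * a ^ (m + j)
        = (((Z ω).toReal ^ q⁻¹ * a) * a ^ m) * a ^ j := by
      intro j; rw [pow_add]; ring
    have heq : ∑' j : ℕ, ((Z ω).toReal ^ q⁻¹ * a) * a ^ (m + j)
        = ((Z ω).toReal ^ q⁻¹ * (a/(1-a))) * a ^ m := by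
      calc ∑' j : ℕ, ((Z ω).toReal ^ q⁻¹ * a) * a ^ (m + j)
          = ∑' j : ℕ, (((Z ω).toReal ^ q⁻¹ * a) * a ^ m) * a ^ j := tsum_congr e1
        _ = (((Z ω).toReal ^ q⁻¹ * a) * a ^ m) * (1 - a)⁻¹ := by
            rw [tsum_mul_left, tsum_geometric_of_lt_one ha0.le ha1]
        _ = ((Z ω).toReal ^ q⁻¹ * (a/(1-a))) * a ^ m := by
            rw [div_eq_mul_inv]; ring
    exact hto.trans (le_of_eq heq)
  -- Hölder constant
  set K : ℝ := (2*(a/(1-a)) + 1) * (2/D) ^ α with hKdef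
  have hK0 : 0 < K := by
    have : 0 < 1 - a := by linarith
    have h2D : (0:ℝ) < (2/D) ^ α := Real.rpow_pos_of_pos (by positivity) _
    positivity
  set C' : Ω → ℝ := fun ω => (Z ω).toReal ^ q⁻¹ * K with hC'def
  -- the Hölder property on the good set
  have hHolder : ∀ ω, Z ω ≠ ⊤ → ∀ n, ∀ x ∈ Ball, ∀ y ∈ Ball,
      |g n x ω - g n y ω| ≤ C' ω * ‖x - y‖ ^ α := by
    intro ω hω n x hx y hy
    by_cases hxy : x = y
    · subst hxy
      rw [sub_self, abs_zero, sub_self, norm_zero, Real.zero_rpow hα.ne', mul_zero]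
    · have ht0 : 0 < ‖x - y‖ := norm_pos_iff.2 (sub_ne_zero.2 hxy)
      have hxR : ‖x‖ ≤ R := by rwa [hBall, mem_closedBall, dist_zero_right] at hx
      have hyR : ‖y‖ ≤ R := by rwa [hBall, mem_closedBall, dist_zero_right] at hy
      obtain ⟨m, hm1, hm2⟩ : ∃ m : ℕ, ((2:ℝ) + 2^m * ‖x - y‖ ≤ N) ∧
          a ^ m ≤ (2/D)^α * ‖x - y‖^α := by
        by_cases hcase : ‖x - y‖ < D
        · refine ⟨⌊Real.logb 2 (D/‖x - y‖)⌋₊, ?_, ?_⟩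
          · have h1t : 1 ≤ D/‖x - y‖ := (one_le_div ht0).2 hcase.le
            have hlog0 : 0 ≤ Real.logb 2 (D/‖x - y‖) := Real.logb_nonneg one_lt_two h1t
            have hup : (2:ℝ)^⌊Real.logb 2 (D/‖x - y‖)⌋₊ ≤ D/‖x - y‖ := by
              calc (2:ℝ)^⌊Real.logb 2 (D/‖x - y‖)⌋₊
                  = (2:ℝ)^((⌊Real.logb 2 (D/‖x - y‖)⌋₊ : ℕ):ℝ) :=
                    (Real.rpow_natCast 2 _).symm
                _ ≤ (2:ℝ)^(Real.logb 2 (D/‖x - y‖)) :=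
                    Real.rpow_le_rpow_of_exponent_le one_le_two (Nat.floor_le hlog0)
                _ = D/‖x - y‖ := Real.rpow_logb two_pos (by norm_num) (by positivity)
            have : (2:ℝ)^⌊Real.logb 2 (D/‖x - y‖)⌋₊ * ‖x - y‖ ≤ D := by
              rw [← le_div_iff₀ ht0]; exact hup
            linarith [hNge, hD1, hR]
          · have hlow : D/‖x - y‖ < 2^(⌊Real.logb 2 (D/‖x - y‖)⌋₊+1) := by
              calc D/‖x - y‖ = (2:ℝ)^(Real.logb 2 (D/‖x - y‖)) :=
                    (Real.rpow_logb two_pos (by norm_num) (by positivity)).symm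
                _ < (2:ℝ)^(((⌊Real.logb 2 (D/‖x - y‖)⌋₊+1 : ℕ)):ℝ) := by
                    apply Real.rpow_lt_rpow_of_exponent_lt one_lt_two
                    push_cast
                    exact Nat.lt_floor_add_one _
                _ = 2^(⌊Real.logb 2 (D/‖x - y‖)⌋₊+1) := Real.rpow_natCast _ _
            set m := ⌊Real.logb 2 (D/‖x - y‖)⌋₊ with hmdef
            have hinv : ((2:ℝ)^m)⁻¹ ≤ 2*‖x - y‖/D := by
              have h2m : (0:ℝ) < 2^m := pow_pos two_pos m
              have hD' : D < 2^(m+1) * ‖x - y‖ := (div_lt_iff₀ ht0).1 hlow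
              rw [pow_succ] at hD'
              rw [inv_eq_one_div, div_le_div_iff₀ h2m hD0, one_mul]
              nlinarith
            have ham : a ^ m = ((2:ℝ)^m)⁻¹ ^ α := by
              rw [hadef, ← Real.rpow_natCast ((2:ℝ)^(-α)) m, ← Real.rpow_mul (by norm_num),
                ← Real.rpow_natCast (2:ℝ) m, ← Real.inv_rpow (by norm_num),
                ← Real.rpow_neg_one (2:ℝ), ← Real.rpow_mul (by norm_num),
                ← Real.rpow_mul (by norm_num)]
              congr 1
              ring
            rw [ham]
            calc ((2:ℝ)^m)⁻¹ ^ α ≤ (2*‖x - y‖/D) ^ α :=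
                  Real.rpow_le_rpow (by positivity) hinv hα.le
              _ = (2/D)^α * ‖x - y‖^α := by
                  rw [show (2*‖x - y‖/D) = (2/D) * ‖x - y‖ by ring,
                    Real.mul_rpow (by positivity) (by positivity)]
        · push_neg at hcase
          refine ⟨0, ?_, ?_⟩
          · have : ‖x - y‖ ≤ 2*R := by
              calc ‖x - y‖ ≤ ‖x‖ + ‖y‖ := norm_sub_le _ _
                _ ≤ 2*R := by linarith
            simp only [pow_zero, one_mul]
            linarith [hNge, hD1]
          · have h2t : (1:ℝ) ≤ (2/D) * ‖x - y‖ := by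
              rw [div_mul_eq_mul_div, le_div_iff₀ hD0]
              linarith
            calc a ^ 0 = 1 := pow_zero a
              _ ≤ ((2/D) * ‖x - y‖) ^ α := Real.one_le_rpow h2t hα.le
              _ = (2/D)^α * ‖x - y‖^α := Real.mul_rpow (by positivity) (by positivity)
      have hc := hCross ω hω n x hx y hy m hm1
      have hl1 := hlim ω hω n x hx m
      have hl2 := hlim ω hω n y hy m
      have htri : dist (g n x ω) (g n y ω)
          ≤ dist (g n x ω) (f n (tk d m x) ω) + dist (f n (tk d m x) ω) (f n (tk d m y) ω)
            + dist (f n (tk d m y) ω) (g n y ω) := dist_triangle4 _ _ _ _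
      rw [dist_comm (g n x ω) (f n (tk d m x) ω)] at htri
      rw [Real.dist_eq, Real.dist_eq, Real.dist_eq, Real.dist_eq] at htri
      have hcnn : (0:ℝ) ≤ (Z ω).toReal ^ q⁻¹ := Real.rpow_nonneg ENNReal.toReal_nonneg _
      have h1a : (0:ℝ) < 1 - a := by linarith
      have hKc : (0:ℝ) ≤ 2*(a/(1-a)) + 1 := by positivity
      calc |g n x ω - g n y ω|
          ≤ ((Z ω).toReal ^ q⁻¹ * (a/(1-a))) * a ^ m + (Z ω).toReal ^ q⁻¹ * a ^ m
            + ((Z ω).toReal ^ q⁻¹ * (a/(1-a))) * a ^ m := by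
            refine htri.trans (add_le_add (add_le_add hl1 hc) hl2)
        _ = ((Z ω).toReal ^ q⁻¹ * (2*(a/(1-a)) + 1)) * a ^ m := by ring
        _ ≤ ((Z ω).toReal ^ q⁻¹ * (2*(a/(1-a)) + 1)) * ((2/D)^α * ‖x - y‖^α) := by
            exact mul_le_mul_of_nonneg_left hm2 (by positivity)
        _ = C' ω * ‖x - y‖ ^ α := by rw [hC'def, hKdef]; ring
  -- modification property
  have hmod : ∀ n, ∀ x ∈ Ball, ℙ {ω | g n x ω = f n x ω} = 1 := by
    intro n x hx
    have hTIM : TendstoInMeasure ℙ (fun k => f n (tk d k x)) atTop (f n x) := by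
      rw [tendstoInMeasure_iff_dist]
      intro ε hε
      set r : ℝ := (2:ℝ)^(-((d:ℝ)+β)) with hrdef
      have hr0 : 0 < r := Real.rpow_pos_of_pos two_pos _
      have hr1 : r < 1 := Real.rpow_lt_one_of_one_lt_of_neg one_lt_two
        (by have : (0:ℝ) ≤ (d:ℝ) := Nat.cast_nonneg d; linarith)
      have hbd : ∀ k : ℕ, ℙ {ω | ε ≤ dist (f n (tk d k x) ω) (f n x ω)}
          ≤ ENNReal.ofReal (C * D^((d:ℝ)+β) * r^k) / ENNReal.ofReal (ε^q) := by
        intro k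
        have hsub : {ω | ε ≤ dist (f n (tk d k x) ω) (f n x ω)}
            ⊆ {ω | ENNReal.ofReal (ε^q) ≤ M (tk d k x) x ω} := by
          intro ω hω1
          simp only [mem_setOf_eq] at *
          refine le_trans (ENNReal.ofReal_le_ofReal ?_)
            (le_iSup (fun n => ENNReal.ofReal (|f n (tk d k x) ω - f n x ω| ^ q)) n)
          rw [Real.dist_eq] at hω1
          exact Real.rpow_le_rpow hε.le hω1 hq.le
        refine (measure_mono hsub).trans ?_
        refine (meas_ge_le_lintegral_div (hMmeas _ (tk_mem_ball hx) _ hx).aemeasurable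
          (ENNReal.ofReal_pos.2 (Real.rpow_pos_of_pos hε _)).ne' ENNReal.ofReal_ne_top).trans ?_
        apply ENNReal.div_le_div_right
        refine (hbound _ (tk_mem_ball hx) _ hx).trans (ENNReal.ofReal_le_ofReal ?_)
        have hn2 : ‖tk d k x - x‖ ≤ D/2^k := by
          rw [norm_sub_rev]; exact norm_sub_tk_le x
        calc C * ‖tk d k x - x‖^((d:ℝ)+β) ≤ C * (D/2^k)^((d:ℝ)+β) :=
              mul_le_mul_of_nonneg_left
                (Real.rpow_le_rpow (norm_nonneg _) hn2 (by positivity)) hC.le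
          _ = C * D^((d:ℝ)+β) * r^k := by
              have h2 : ((1:ℝ)/2^k)^((d:ℝ)+β) = r^k := by
                rw [hrdef, ← Real.rpow_natCast ((2:ℝ)^(-((d:ℝ)+β))) k,
                  ← Real.rpow_mul (by norm_num), one_div, ← Real.rpow_natCast (2:ℝ) k,
                  ← Real.rpow_neg (by norm_num), ← Real.rpow_mul (by norm_num)]
                congr 1
                ring
              have h3 : (D/2^k)^((d:ℝ)+β) = D^((d:ℝ)+β) * ((1:ℝ)/2^k)^((d:ℝ)+β) := by
                rw [← Real.mul_rpow hD0.le (by positivity)]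
                congr 1
                ring
              rw [h3, h2]
              ring
      have hlim0 : Tendsto (fun k : ℕ => ENNReal.ofReal (C * D^((d:ℝ)+β) * r^k)
          / ENNReal.ofReal (ε^q)) atTop (𝓝 0) := by
        have h0 : Tendsto (fun k : ℕ => C * D^((d:ℝ)+β) * r^k) atTop (𝓝 0) := by
          have := (tendsto_pow_atTop_nhds_zero_of_lt_one hr0.le hr1).const_mul
            (C * D^((d:ℝ)+β))
          simpa using this
        have h1 := ENNReal.Tendsto.mul_const (b := (ENNReal.ofReal (ε^q))⁻¹)
          (ENNReal.tendsto_ofReal h0)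
          (Or.inr (ENNReal.inv_ne_top.2 (ENNReal.ofReal_pos.2
            (Real.rpow_pos_of_pos hε q)).ne'))
        simpa [ENNReal.ofReal_zero, div_eq_mul_inv] using h1
      exact tendsto_of_tendsto_of_tendsto_of_le_of_le tendsto_const_nhds hlim0
        (fun k => zero_le) hbd
    obtain ⟨ns, hns, hae⟩ := hTIM.exists_seq_tendsto_ae
    have haeq : ∀ᵐ ω ∂ℙ, g n x ω = f n x ω := by
      filter_upwards [hae, hZae] with ω h1 h2
      have h3 := htendsto ω h2.ne n x hx
      exact tendsto_nhds_unique (h3.comp hns.tendsto_atTop) h1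
    have hnull : ℙ {ω | ¬ (g n x ω = f n x ω)} = 0 := ae_iff.mp haeq
    refine le_antisymm prob_le_one ?_
    calc (1:ℝ≥0∞) = ℙ univ := measure_univ.symm
      _ ≤ ℙ ({ω | ¬ (g n x ω = f n x ω)} ∪ {ω | g n x ω = f n x ω}) := by
          apply measure_mono
          intro ω _
          by_cases h : g n x ω = f n x ω
          exacts [Or.inr h, Or.inl h]
      _ ≤ ℙ {ω | ¬ (g n x ω = f n x ω)} + ℙ {ω | g n x ω = f n x ω} := measure_union_le _ _
      _ = ℙ {ω | g n x ω = f n x ω} := by rw [hnull, zero_add]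
  refine ⟨g, C', hmod, ?_, ?_, ?_⟩
  · exact ((ENNReal.measurable_toReal.comp hZmeas).pow_const _).mul_const _
  · intro ω
    exact mul_nonneg (Real.rpow_nonneg ENNReal.toReal_nonneg _) hK0.le
  · filter_upwards [hZae] with ω hω
    exact fun n x hx y hy => hHolder ω hω.ne n x hx y hy
end

section
/- Planar Green kernel via compensated heat kernel: For all x, u ∈ ℝ² with x ≠ u, the function r ↦ (e^{−|x−u|²/(2r)} − e^{−1/(2r)})/(2πr) is Lebesgue integrable on (0,∞), and ∫_0^∞ (e^{−|x−u|²/(2r)} − e^{−1/(2r)})/(2πr) dr = (1/π)·ln(1/|x−u|). -/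
open MeasureTheory Set Real

lemma inner_exp (t : ℝ) (ht : 0 < t) :
    ∫ s in Ioi (0:ℝ), Real.exp (-(t * s)) = 1 / t := by
  have := integral_comp_mul_left_Ioi (fun y => Real.exp (-y)) 0 ht
  simp only [mul_zero, smul_eq_mul] at this
  rw [show (fun s => Real.exp (-(t*s))) = (fun s => (fun y => Real.exp (-y)) (t * s)) from rfl,
    this, integral_exp_neg_Ioi]
  simp [one_div]

lemma inner_t (s a b : ℝ) (hs : s ≠ 0) (hab : a ≤ b) :
    ∫ t in Ioc a b, Real.exp (-(t * s)) = (Real.exp (-(a*s)) - Real.exp (-(b*s))) / s := by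
  rw [← intervalIntegral.integral_of_le hab]
  have h1 := intervalIntegral.integral_comp_mul_right (a := a) (b := b)
      (fun y => Real.exp (-y)) hs
  rw [show (fun t => Real.exp (-(t*s))) = (fun t => (fun y => Real.exp (-y)) (t * s)) from rfl,
    h1]
  have h2 := intervalIntegral.integral_comp_neg (a := a * s) (b := b * s) Real.exp
  rw [show (fun y => Real.exp (-y)) = (fun y => Real.exp (-y)) from rfl]
  rw [h2, integral_exp]
  simp [smul_eq_mul, neg_mul, sub_div _ _ s]
  ring

lemma frullani (a b : ℝ) (ha : 0 < a) (hab : a ≤ b) :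
    IntegrableOn (fun s => (Real.exp (-(a*s)) - Real.exp (-(b*s)))/s) (Ioi (0:ℝ)) ∧
    ∫ s in Ioi (0:ℝ), (Real.exp (-(a*s)) - Real.exp (-(b*s)))/s = Real.log b - Real.log a := by
  have hb : 0 < b := ha.trans_le hab
  set μ := volume.restrict (Ioc a b) with hμ
  set ν := volume.restrict (Ioi (0:ℝ)) with hν
  set F : ℝ × ℝ → ℝ := fun p => Real.exp (-(p.1 * p.2)) with hF
  have hmeas : AEStronglyMeasurable F (μ.prod ν) := by
    apply Continuous.aestronglyMeasurable; continuity
  have hInt : Integrable F (μ.prod ν) := by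
    rw [integrable_prod_iff hmeas]
    constructor
    · refine (ae_restrict_iff' measurableSet_Ioc).2 (ae_of_all _ fun t ht => ?_)
      have ht0 : 0 < t := ha.trans ht.1
      simpa [neg_mul, hF, hν, IntegrableOn] using exp_neg_integrableOn_Ioi 0 ht0
    · have h1 : IntegrableOn (fun t => 1/t) (Ioc a b) := by
        have hc : ContinuousOn (fun t : ℝ => 1/t) (Icc a b) :=
          ContinuousOn.div continuousOn_const continuousOn_id
            (fun t ht => (ha.trans_le ht.1).ne')
        exact (ContinuousOn.integrableOn_compact' isCompact_Icc measurableSet_Icc hc).mono_set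
          Ioc_subset_Icc_self
      refine h1.congr ((ae_restrict_iff' measurableSet_Ioc).2 (ae_of_all _ fun t ht => ?_))
      have ht0 : 0 < t := ha.trans ht.1
      simp only [hF, Real.norm_eq_abs, Real.abs_exp]
      exact (inner_exp t ht0).symm
  have hswap : ∫ t, (∫ s, F (t, s) ∂ν) ∂μ = ∫ s, (∫ t, F (t, s) ∂μ) ∂ν :=
    integral_integral_swap hInt
  have hG : Integrable (fun s => ∫ t, F (t, s) ∂μ) ν := hInt.integral_prod_right
  have hcong : ∀ s ∈ Ioi (0:ℝ), (∫ t, F (t, s) ∂μ)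
      = (Real.exp (-(a*s)) - Real.exp (-(b*s)))/s := fun s hs =>
    inner_t s a b (ne_of_gt hs) hab
  constructor
  · exact (IntegrableOn.congr_fun hG hcong measurableSet_Ioi : _)
  · rw [← setIntegral_congr_fun measurableSet_Ioi hcong, ← hswap]
    have : ∀ t ∈ Ioc a b, (∫ s, F (t, s) ∂ν) = 1/t := fun t ht =>
      inner_exp t (ha.trans ht.1)
    rw [setIntegral_congr_fun measurableSet_Ioc this, ← intervalIntegral.integral_of_le hab,
      integral_one_div, Real.log_div hb.ne' ha.ne']
    intro h
    rw [uIcc_of_le hab] at h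
    exact absurd h.1 (not_le.mpr ha)

lemma frullani' (a b : ℝ) (ha : 0 < a) (hb : 0 < b) :
    IntegrableOn (fun s => (Real.exp (-(a*s)) - Real.exp (-(b*s)))/s) (Ioi (0:ℝ)) ∧
    ∫ s in Ioi (0:ℝ), (Real.exp (-(a*s)) - Real.exp (-(b*s)))/s = Real.log b - Real.log a := by
  rcases le_total a b with hab | hab
  · exact frullani a b ha hab
  · obtain ⟨h1, h2⟩ := frullani b a hb hab
    have hfun : (fun s : ℝ => (Real.exp (-(a*s)) - Real.exp (-(b*s)))/s)
        = fun s => -((Real.exp (-(b*s)) - Real.exp (-(a*s)))/s) := by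
      funext s; ring
    constructor
    · rw [hfun]; exact h1.neg
    · rw [hfun, integral_neg, h2]; ring

/-- **Planar Green kernel via compensated heat kernel.**
For `x ≠ u` in `ℝ²`, the function
`r ↦ (exp(-|x-u|²/(2r)) - exp(-1/(2r))) / (2πr)` is Lebesgue integrable on `(0,∞)` and
its integral equals `(1/π) * ln(1/|x-u|)`. -/
theorem compensated_heat_kernel_green
    (x u : EuclideanSpace ℝ (Fin 2)) (hxu : x ≠ u) :
    IntegrableOn
      (fun r : ℝ => (Real.exp (-‖x - u‖ ^ 2 / (2 * r)) - Real.exp (-1 / (2 * r)))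
        / (2 * π * r)) (Ioi (0 : ℝ)) volume ∧
    ∫ r in Ioi (0 : ℝ),
        (Real.exp (-‖x - u‖ ^ 2 / (2 * r)) - Real.exp (-1 / (2 * r))) / (2 * π * r)
      = (1 / π) * Real.log (1 / ‖x - u‖) := by
  have hd : 0 < ‖x - u‖ := by
    rw [norm_pos_iff, sub_ne_zero]; exact hxu
  set a : ℝ := ‖x - u‖ ^ 2 / 2 with ha_def
  have ha : 0 < a := by positivity
  have hb : (0:ℝ) < 1/2 := by norm_num
  set g : ℝ → ℝ := fun s => (Real.exp (-(a*s)) - Real.exp (-((1/2)*s)))/s with hg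
  obtain ⟨hInt, hVal⟩ := frullani' a (1/2) ha hb
  -- substitution y = x⁻¹
  have hiff := integrableOn_Ioi_comp_rpow_iff (f := g) (p := (-1:ℝ)) (by norm_num)
  have hval2 := integral_comp_rpow_Ioi (g := g) (p := (-1:ℝ)) (by norm_num)
  have hcong : ∀ r ∈ Ioi (0:ℝ),
      (|(-1:ℝ)| * r ^ ((-1:ℝ) - 1)) • g (r ^ (-1:ℝ))
      = (2*π) * ((Real.exp (-‖x - u‖ ^ 2 / (2 * r)) - Real.exp (-1 / (2 * r)))
        / (2 * π * r)) := by
    intro r hr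
    have hr0 : (0:ℝ) < r := hr
    rw [Real.rpow_neg_one, show ((-1:ℝ) - 1) = (-2:ℝ) by norm_num,
      Real.rpow_neg hr0.le, Real.rpow_two]
    have h1 : -(a * r⁻¹) = -‖x - u‖ ^ 2 / (2 * r) := by
      rw [ha_def]; field_simp
    have h2 : -((1/2 : ℝ) * r⁻¹) = -1 / (2 * r) := by field_simp
    simp only [hg, h1, h2, abs_neg, abs_one, smul_eq_mul]
    have hπ : (π:ℝ) ≠ 0 := Real.pi_ne_zero
    field_simp
  have hIntC : IntegrableOn (fun r : ℝ => (|(-1:ℝ)| * r ^ ((-1:ℝ) - 1)) • g (r ^ (-1:ℝ)))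
      (Ioi (0:ℝ)) := hiff.mpr hInt
  have hIntF : IntegrableOn
      (fun r : ℝ => (Real.exp (-‖x - u‖ ^ 2 / (2 * r)) - Real.exp (-1 / (2 * r)))
        / (2 * π * r)) (Ioi (0 : ℝ)) volume := by
    have := (hIntC.congr_fun hcong measurableSet_Ioi).const_mul (2*π)⁻¹
    refine IntegrableOn.congr_fun this (fun r hr => ?_) measurableSet_Ioi
    have hπ : (π:ℝ) ≠ 0 := Real.pi_ne_zero
    field_simp
  refine ⟨hIntF, ?_⟩
  have heq : ∫ r in Ioi (0:ℝ),
      (Real.exp (-‖x - u‖ ^ 2 / (2 * r)) - Real.exp (-1 / (2 * r))) / (2 * π * r)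
      = (2*π)⁻¹ * ∫ r in Ioi (0:ℝ), (|(-1:ℝ)| * r ^ ((-1:ℝ) - 1)) • g (r ^ (-1:ℝ)) := by
    rw [← integral_const_mul]
    refine setIntegral_congr_fun measurableSet_Ioi (fun r hr => ?_)
    rw [hcong r hr]
    have hπ : (π:ℝ) ≠ 0 := Real.pi_ne_zero
    field_simp
  rw [heq, hval2, hVal]
  have hlog : Real.log (1/2) - Real.log a = -2 * Real.log ‖x - u‖ := by
    rw [ha_def, Real.log_div one_ne_zero two_ne_zero,
      Real.log_div (by positivity) two_ne_zero, Real.log_pow]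
    rw [Real.log_one]; push_cast; ring
  rw [hlog, Real.log_div one_ne_zero hd.ne', Real.log_one]
  have hπ : (π:ℝ) ≠ 0 := Real.pi_ne_zero
  field_simp
  ring
end

section
/- Convergence to the logarithmic potential for measures with integrable logarithm: Let μ be a finite Borel measure on ℝ² with compact support, and let x ∈ ℝ² be such that ∫_{ℝ²} |ln|x−u|| μ(du) < ∞. Then lim_{t→∞} ∫_{ℝ²} ( ∫_0^t (e^{−|x−u|²/(2r)} − e^{−1/(2r)})/(2πr) dr ) μ(du) = (1/π) ∫_{ℝ²} ln(1/|x−u|) μ(du). -/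
open MeasureTheory Set Real Filter

namespace LogPotentialAux

/-- The compensating heat-kernel profile `v ↦ e^{-1/(2v)}/(2πv)`. -/
noncomputable def g (v : ℝ) : ℝ := Real.exp (-1 / (2 * v)) / (2 * π * v)

lemma g_meas : Measurable g := by
  unfold g; fun_prop

lemma g_nonneg {v : ℝ} (hv : 0 < v) : 0 ≤ g v :=
  div_nonneg (Real.exp_nonneg _) (by positivity)

lemma g_le_inv {v : ℝ} (hv : 0 < v) : g v ≤ (2 * π * v)⁻¹ := by
  rw [g, div_eq_mul_inv]
  have h1 : Real.exp (-1 / (2 * v)) ≤ 1 := by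
    rw [Real.exp_le_one_iff, neg_div]
    have : (0:ℝ) ≤ 1 / (2 * v) := by positivity
    linarith
  nlinarith [inv_nonneg.2 (le_of_lt (show (0:ℝ) < 2 * π * v by positivity))]

lemma g_le_pi {v : ℝ} (hv : 0 < v) : g v ≤ π⁻¹ := by
  have h1 : Real.exp (-1 / (2 * v)) ≤ 2 * v := by
    have h2 : (1:ℝ) / (2 * v) ≤ Real.exp (1 / (2 * v)) := by
      linarith [Real.add_one_le_exp (1 / (2*v))]
    have h3 : Real.exp (-1 / (2 * v)) = (Real.exp (1 / (2 * v)))⁻¹ := by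
      rw [← Real.exp_neg]; ring_nf
    rw [h3]
    have h4 : (0:ℝ) < 1 / (2 * v) := by positivity
    have h5 : (Real.exp (1 / (2 * v)))⁻¹ ≤ (1 / (2 * v))⁻¹ := inv_anti₀ h4 h2
    simpa using h5.trans_eq (by field_simp)
  rw [g, div_le_iff₀ (by positivity)]
  calc Real.exp (-1 / (2 * v)) ≤ 2 * v := h1
    _ = π⁻¹ * (2 * π * v) := by field_simp

lemma g_abs_le_pi {v : ℝ} (hv : 0 < v) : ‖g v‖ ≤ π⁻¹ := by
  rw [Real.norm_eq_abs, abs_of_nonneg (g_nonneg hv)]; exact g_le_pi hv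

/-- `g` is integrable on any bounded interval of positives. -/
lemma g_integrableOn {a b : ℝ} (ha : 0 ≤ a) : IntegrableOn g (Ioo a b) := by
  apply Measure.integrableOn_of_bounded (M := π⁻¹)
  · exact ((measure_mono Ioo_subset_Icc_self).trans_lt (by simp)).ne
  · exact g_meas.aestronglyMeasurable
  · filter_upwards [ae_restrict_mem measurableSet_Ioo] with v hv
    exact g_abs_le_pi (lt_of_le_of_lt ha hv.1)

lemma g_intervalIntegrable {a b : ℝ} (ha : 0 ≤ a) (hb : 0 ≤ b) :
    IntervalIntegrable g volume a b := by
  rw [intervalIntegrable_iff]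
  refine (g_integrableOn (a := min a b) (b := max a b + 1) (le_min ha hb)).mono_set ?_
  rw [uIoc]
  exact fun y hy => ⟨hy.1, hy.2.trans_lt (lt_add_one _)⟩

/-- Helper: compare |interval integrals| for `0 ≤ f ≤ h`. -/
lemma abs_intervalIntegral_le {f h : ℝ → ℝ} {a b : ℝ}
    (hf : IntervalIntegrable f volume a b) (hh : IntervalIntegrable h volume a b)
    (h0 : ∀ y ∈ uIcc a b, 0 ≤ f y ∧ f y ≤ h y) :
    |∫ y in a..b, f y| ≤ |∫ y in a..b, h y| := by
  rcases le_total a b with hab | hab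
  · rw [uIcc_of_le hab] at h0
    have h1 : (0:ℝ) ≤ ∫ y in a..b, f y :=
      intervalIntegral.integral_nonneg hab (fun y hy => (h0 y hy).1)
    have h2 : (∫ y in a..b, f y) ≤ ∫ y in a..b, h y :=
      intervalIntegral.integral_mono_on hab hf hh (fun y hy => (h0 y hy).2)
    rw [abs_of_nonneg h1, abs_of_nonneg (h1.trans h2)]
    exact h2
  · rw [uIcc_of_ge hab] at h0
    rw [intervalIntegral.integral_symm, abs_neg, intervalIntegral.integral_symm b a, abs_neg]
    have h1 : (0:ℝ) ≤ ∫ y in b..a, f y :=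
      intervalIntegral.integral_nonneg hab (fun y hy => (h0 y hy).1)
    have h2 : (∫ y in b..a, f y) ≤ ∫ y in b..a, h y :=
      intervalIntegral.integral_mono_on hab hf.symm hh.symm (fun y hy => (h0 y hy).2)
    rw [abs_of_nonneg h1, abs_of_nonneg (h1.trans h2)]
    exact h2

lemma inv_two_pi_intervalIntegrable {a b : ℝ} (ha : 0 < a) (hb : 0 < b) :
    IntervalIntegrable (fun v : ℝ => (2 * π * v)⁻¹) volume a b := by
  apply intervalIntegral.intervalIntegrable_inv (f := fun v : ℝ => 2 * π * v)
  · intro y hy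
    have h0 : (0:ℝ) < y := lt_of_lt_of_le (lt_min ha hb) hy.1
    positivity
  · fun_prop

lemma integral_inv_two_pi {a b : ℝ} (ha : 0 < a) (hb : 0 < b) :
    ∫ v in a..b, (2 * π * v)⁻¹ = (2 * π)⁻¹ * Real.log (b / a) := by
  have h : ∀ v : ℝ, (2 * π * v)⁻¹ = (2 * π)⁻¹ * v⁻¹ := fun v => by rw [mul_inv]
  simp_rw [h]
  rw [intervalIntegral.integral_const_mul, integral_inv (notMem_uIcc_of_lt ha hb)]

/-- Key identity: the compensated inner integral equals `∫_{t}^{t/s²} g`. -/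
lemma inner_eq {s t : ℝ} (hs : 0 < s) (ht : 0 < t) :
    (∫ r in Ioo (0:ℝ) t,
      (Real.exp (-s ^ 2 / (2 * r)) - Real.exp (-1 / (2 * r))) / (2 * π * r))
      = ∫ v in t..(t / s ^ 2), g v := by
  have hs2 : (0:ℝ) < s ^ 2 := by positivity
  have hcongr : ∀ r ∈ Ioo (0:ℝ) t,
      (Real.exp (-s ^ 2 / (2 * r)) - Real.exp (-1 / (2 * r))) / (2 * π * r)
        = (s ^ 2)⁻¹ * g (r / s ^ 2) - g r := by
    intro r hr
    have hr0 : 0 < r := hr.1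
    have hpi : (0:ℝ) < π := Real.pi_pos
    have harg : -1 / (2 * (r / s ^ 2)) = -s ^ 2 / (2 * r) := by
      field_simp
    have hg : g (r / s ^ 2) = Real.exp (-s ^ 2 / (2 * r)) * s ^ 2 / (2 * π * r) := by
      rw [g, harg]
      rw [div_eq_div_iff (by positivity) (by positivity)]
      field_simp
    rw [hg, g]
    field_simp
  rw [setIntegral_congr_fun measurableSet_Ioo hcongr]
  have hg1 : IntegrableOn (fun r => (s ^ 2)⁻¹ * g (r / s ^ 2)) (Ioo (0:ℝ) t) := by
    have hvol : volume (Ioo (0:ℝ) t) ≠ ⊤ := by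
      rw [Real.volume_Ioo]; exact ENNReal.ofReal_ne_top
    have haes : AEStronglyMeasurable (fun r => (s ^ 2)⁻¹ * g (r / s ^ 2))
        volume :=
      (((g_meas.comp (measurable_id.div_const _)).const_mul _)).aestronglyMeasurable
    refine Measure.integrableOn_of_bounded (M := (s ^ 2)⁻¹ * π⁻¹) hvol haes ?_
    filter_upwards [ae_restrict_mem measurableSet_Ioo] with r hr
    have h1 : 0 < r / s ^ 2 := div_pos hr.1 hs2
    rw [norm_mul, Real.norm_eq_abs, abs_of_nonneg (by positivity : (0:ℝ) ≤ (s ^ 2)⁻¹)]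
    exact mul_le_mul_of_nonneg_left (g_abs_le_pi h1) (by positivity)
  have hg2 : IntegrableOn g (Ioo (0:ℝ) t) := g_integrableOn le_rfl
  rw [integral_sub hg1 hg2]
  have hIoo : ∀ (f : ℝ → ℝ), (∫ r in Ioo (0:ℝ) t, f r) = ∫ r in (0:ℝ)..t, f r := by
    intro f
    rw [intervalIntegral.integral_of_le ht.le, ← integral_Ioc_eq_integral_Ioo]
  rw [hIoo, hIoo]
  have hcomp : (∫ r in (0:ℝ)..t, (s ^ 2)⁻¹ * g (r / s ^ 2))
      = ∫ v in (0:ℝ)..(t / s ^ 2), g v := by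
    rw [intervalIntegral.integral_const_mul,
      intervalIntegral.integral_comp_div (f := g) hs2.ne', smul_eq_mul, zero_div,
      ← mul_assoc, inv_mul_cancel₀ hs2.ne', one_mul]
  rw [hcomp]
  exact intervalIntegral.integral_interval_sub_left
    (g_intervalIntegrable le_rfl (by positivity)) (g_intervalIntegrable le_rfl ht.le)


/-- Uniform bound on the interval integral of `g`. -/
lemma abs_integral_g_le {s t : ℝ} (hs : 0 < s) (ht : 0 < t) :
    |∫ v in t..(t / s ^ 2), g v| ≤ (1 / π) * |Real.log s| := by
  have hts : 0 < t / s ^ 2 := by positivity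
  have hmin : 0 < min t (t / s ^ 2) := lt_min ht hts
  have hcmp := abs_intervalIntegral_le (g_intervalIntegrable ht.le hts.le)
    (inv_two_pi_intervalIntegrable ht hts) (fun y hy => by
      have hy0 : 0 < y := lt_of_lt_of_le hmin hy.1
      exact ⟨g_nonneg hy0, g_le_inv hy0⟩)
  refine hcmp.trans_eq ?_
  rw [integral_inv_two_pi ht hts]
  have h1 : (t / s ^ 2) / t = (s ^ 2)⁻¹ := by
    field_simp
  rw [h1, Real.log_inv, Real.log_pow]
  have hpi : (0 : ℝ) < π := Real.pi_pos
  rw [abs_mul, abs_of_nonneg (by positivity : (0:ℝ) ≤ (2 * π)⁻¹), abs_neg]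
  push_cast
  rw [abs_mul, abs_of_nonneg (by norm_num : (0:ℝ) ≤ 2)]
  field_simp

/-- The limit of the interval integral of `g`. -/
lemma tendsto_integral_g {s : ℝ} (hs : 0 < s) :
    Tendsto (fun t : ℝ => ∫ v in t..(t / s ^ 2), g v) atTop
      (nhds ((1 / π) * Real.log (1 / s))) := by
  have hpi : (0 : ℝ) < π := Real.pi_pos
  set E : ℝ → ℝ := fun t => ∫ v in t..(t / s ^ 2), ((2 * π * v)⁻¹ - g v) with hE
  have hEbd : ∀ t : ℝ, 0 < t → |E t| ≤ (4 * π)⁻¹ * (1 + s ^ 2) / t := by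
    intro t ht
    have hts : 0 < t / s ^ 2 := by positivity
    have hmin : 0 < min t (t / s ^ 2) := lt_min ht hts
    have hint1 : IntervalIntegrable (fun v => (2 * π * v)⁻¹ - g v) volume t (t / s ^ 2) :=
      (inv_two_pi_intervalIntegrable ht hts).sub (g_intervalIntegrable ht.le hts.le)
    have hint2 : IntervalIntegrable (fun v : ℝ => (4 * π)⁻¹ * v ^ (-2 : ℤ)) volume t (t / s ^ 2) := by
      refine IntervalIntegrable.const_mul ?_ _
      exact intervalIntegral.intervalIntegrable_zpow
        (Or.inr (notMem_uIcc_of_lt ht hts))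
    have hcmp := abs_intervalIntegral_le hint1 hint2 (fun y hy => by
      have hy0 : 0 < y := lt_of_lt_of_le hmin hy.1
      constructor
      · exact sub_nonneg.2 (g_le_inv hy0)
      · have hexp : 1 - 1 / (2 * y) ≤ Real.exp (-1 / (2 * y)) := by
          rw [show -1 / (2 * y) = -(1 / (2 * y)) by ring]
          have := Real.add_one_le_exp (-(1 / (2 * y)))
          linarith
        have hstep : (2 * π * y)⁻¹ - g y = (1 - Real.exp (-1 / (2 * y))) / (2 * π * y) := by
          rw [g]; ring
        rw [hstep]
        have hstep2 : (1 - Real.exp (-1 / (2 * y))) / (2 * π * y)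
            ≤ (1 / (2 * y)) / (2 * π * y) := by
          rw [div_le_div_iff_of_pos_right (by positivity : (0:ℝ) < 2 * π * y)]
          linarith
        refine hstep2.trans_eq ?_
        rw [zpow_neg, zpow_two]
        field_simp
        ring)
    refine hcmp.trans ?_
    rw [intervalIntegral.integral_const_mul, integral_zpow
      (Or.inr ⟨by decide, notMem_uIcc_of_lt ht hts⟩)]
    rw [abs_mul, abs_of_nonneg (by positivity : (0:ℝ) ≤ (4 * π)⁻¹)]
    push_cast
    rw [zpow_neg_one, zpow_neg_one]
    have hval : ((t / s ^ 2)⁻¹ - t⁻¹) / ((-2:ℝ) + 1) = (1 - s ^ 2) / t := by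
      rw [show ((-2:ℝ) + 1) = -1 by norm_num, div_neg, div_one]
      field_simp
      ring
    rw [hval, abs_div, abs_of_nonneg ht.le, mul_div_assoc]
    gcongr
    rw [abs_le]
    constructor <;> nlinarith
  have hE0 : Tendsto E atTop (nhds 0) := by
    refine squeeze_zero_norm' (a := fun t : ℝ => (4 * π)⁻¹ * (1 + s ^ 2) / t) ?_ ?_
    · filter_upwards [eventually_gt_atTop (0:ℝ)] with t ht
      exact hEbd t ht
    · rw [show (fun t : ℝ => (4 * π)⁻¹ * (1 + s ^ 2) / t)
        = (fun t : ℝ => ((4 * π)⁻¹ * (1 + s ^ 2)) * t⁻¹) from funext fun t => by ring]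
      have := (tendsto_inv_atTop_zero (𝕜 := ℝ)).const_mul ((4 * π)⁻¹ * (1 + s ^ 2))
      rw [mul_zero] at this
      exact this
  have hmain : Tendsto (fun t : ℝ => (1 / π) * Real.log (1 / s) - E t) atTop
      (nhds ((1 / π) * Real.log (1 / s))) := by
    simpa using tendsto_const_nhds.sub hE0
  apply hmain.congr'
  filter_upwards [eventually_gt_atTop (0:ℝ)] with t ht
  have hts : 0 < t / s ^ 2 := by positivity
  have hsplit : (∫ v in t..(t / s ^ 2), g v)
      = (∫ v in t..(t / s ^ 2), (2 * π * v)⁻¹) - E t := by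
    rw [hE, ← intervalIntegral.integral_sub (inv_two_pi_intervalIntegrable ht hts)
      ((inv_two_pi_intervalIntegrable ht hts).sub (g_intervalIntegrable ht.le hts.le))]
    congr 1
    funext v
    ring
  rw [hsplit, integral_inv_two_pi ht hts]
  have h1 : (t / s ^ 2) / t = (s ^ 2)⁻¹ := by
    field_simp
  rw [h1, Real.log_inv, Real.log_pow]
  simp only [one_div]
  rw [Real.log_inv]
  push_cast
  ring

/-- The degenerate case `s = 0`: the inner integral vanishes (non-integrability). -/
lemma inner_zero {t : ℝ} (ht : 0 < t) :
    (∫ r in Ioo (0:ℝ) t,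
      (Real.exp (-(0:ℝ) ^ 2 / (2 * r)) - Real.exp (-1 / (2 * r))) / (2 * π * r)) = 0 := by
  have hpi : (0 : ℝ) < π := Real.pi_pos
  apply integral_undef
  intro hInt
  set m : ℝ := min t 1 with hm
  have hm0 : 0 < m := lt_min ht one_pos
  have hm1 : m ≤ 1 := min_le_right _ _
  have hInt' : IntegrableOn
      (fun r => (Real.exp (-(0:ℝ) ^ 2 / (2 * r)) - Real.exp (-1 / (2 * r))) / (2 * π * r))
      (Ioo (0:ℝ) m) volume := by
    have hIntOn : IntegrableOn
        (fun r => (Real.exp (-(0:ℝ) ^ 2 / (2 * r)) - Real.exp (-1 / (2 * r))) / (2 * π * r))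
        (Ioo (0:ℝ) t) volume := hInt
    exact hIntOn.mono_set (Ioo_subset_Ioo le_rfl (min_le_left _ _))
  set c : ℝ := (1 - Real.exp (-(1:ℝ)/2)) / (2 * π) with hc
  have hcpos : 0 < c := by
    apply div_pos ?_ (by positivity)
    have : Real.exp (-(1:ℝ)/2) < 1 := Real.exp_lt_one_iff.2 (by norm_num)
    linarith
  have hkey : ∀ r ∈ Ioo (0:ℝ) m, c * r⁻¹
      ≤ (Real.exp (-(0:ℝ) ^ 2 / (2 * r)) - Real.exp (-1 / (2 * r))) / (2 * π * r) := by
    intro r hr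
    have hr0 : 0 < r := hr.1
    have hr1 : r < 1 := lt_of_lt_of_le hr.2 hm1
    have hzero : -(0:ℝ) ^ 2 / (2 * r) = 0 := by norm_num
    rw [hzero, Real.exp_zero]
    have hexp : Real.exp (-1 / (2 * r)) ≤ Real.exp (-(1:ℝ)/2) := by
      apply Real.exp_le_exp.2
      have h5 : (1:ℝ)/2 ≤ 1/(2*r) := by
        rw [div_le_div_iff₀ (by norm_num) (by positivity)]
        nlinarith
      rw [show -1/(2*r) = -(1/(2*r)) by ring, show (-(1:ℝ))/2 = -(1/2) by ring]
      linarith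
    have hceq : c * r⁻¹ = (1 - Real.exp (-(1:ℝ)/2)) / (2 * π * r) := by
      rw [hc]; field_simp
    rw [hceq, div_le_div_iff_of_pos_right (by positivity : (0:ℝ) < 2 * π * r)]
    linarith
  have hIcr : IntegrableOn (fun r : ℝ => c * r⁻¹) (Ioo (0:ℝ) m) volume := by
    apply Integrable.mono' hInt'
    · exact (measurable_const.mul (measurable_inv)).aestronglyMeasurable
    · filter_upwards [ae_restrict_mem measurableSet_Ioo] with r hr
      rw [Real.norm_eq_abs,
        abs_of_nonneg (mul_nonneg hcpos.le (inv_nonneg.2 hr.1.le))]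
      exact hkey r hr
  have hIr : IntegrableOn (fun r : ℝ => r ^ (-1 : ℝ)) (Ioo (0:ℝ) m) volume := by
    have h := hIcr.const_mul c⁻¹
    have h' : IntegrableOn (fun r : ℝ => c⁻¹ * (c * r⁻¹)) (Ioo (0:ℝ) m) volume := h
    apply h'.congr_fun ?_ measurableSet_Ioo
    intro r hr
    show c⁻¹ * (c * r⁻¹) = r ^ (-1 : ℝ)
    rw [Real.rpow_neg_one, ← mul_assoc, inv_mul_cancel₀ hcpos.ne', one_mul]
  rw [intervalIntegral.integrableOn_Ioo_rpow_iff hm0] at hIr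
  norm_num at hIr

end LogPotentialAux

/-- **Convergence to the logarithmic potential for measures with integrable logarithm.**
Let `μ` be a finite Borel measure on `ℝ²` with compact support and let `x ∈ ℝ²` satisfy
`∫ |ln|x-u|| μ(du) < ∞`. Then
`∫ (∫_0^t (exp(-|x-u|²/(2r)) - exp(-1/(2r)))/(2πr) dr) μ(du)` converges, as `t → ∞`, to
`(1/π) ∫ ln(1/|x-u|) μ(du)`. -/
theorem convergence_to_log_potential
    (μ : Measure (EuclideanSpace ℝ (Fin 2))) [IsFiniteMeasure μ]
    (hsupp : ∃ K : Set (EuclideanSpace ℝ (Fin 2)), IsCompact K ∧ μ Kᶜ = 0)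
    (x : EuclideanSpace ℝ (Fin 2))
    (hlog : Integrable (fun u => |Real.log ‖x - u‖|) μ) :
    Tendsto (fun t : ℝ =>
        ∫ u, (∫ r in Ioo (0 : ℝ) t,
          (Real.exp (-‖x - u‖ ^ 2 / (2 * r)) - Real.exp (-1 / (2 * r)))
            / (2 * π * r)) ∂μ)
      atTop (nhds ((1 / π) * ∫ u, Real.log (1 / ‖x - u‖) ∂μ)) := by
  rw [show (1 / π) * ∫ u, Real.log (1 / ‖x - u‖) ∂μ
      = ∫ u, (1 / π) * Real.log (1 / ‖x - u‖) ∂μ from (integral_const_mul _ _).symm]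
  apply tendsto_integral_filter_of_dominated_convergence
    (bound := fun u => (1 / π) * |Real.log ‖x - u‖|)
  · -- measurability
    filter_upwards with t
    apply StronglyMeasurable.aestronglyMeasurable
    apply MeasureTheory.StronglyMeasurable.integral_prod_right
      (f := fun (u : EuclideanSpace ℝ (Fin 2)) (r : ℝ) =>
        (Real.exp (-‖x - u‖ ^ 2 / (2 * r)) - Real.exp (-1 / (2 * r))) / (2 * π * r))
    apply Measurable.stronglyMeasurable
    fun_prop
  · -- uniform bound
    filter_upwards [eventually_gt_atTop (0:ℝ)] with t ht
    apply ae_of_all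
    intro u
    by_cases hu : ‖x - u‖ = 0
    · rw [hu, LogPotentialAux.inner_zero ht]
      simp
    · have hpos : 0 < ‖x - u‖ := (norm_nonneg _).lt_of_ne' hu
      rw [LogPotentialAux.inner_eq hpos ht, Real.norm_eq_abs]
      exact LogPotentialAux.abs_integral_g_le hpos ht
  · exact hlog.const_mul _
  · -- pointwise convergence
    apply ae_of_all
    intro u
    by_cases hu : ‖x - u‖ = 0
    · rw [hu]
      simp only [div_zero, Real.log_zero, mul_zero]
      apply Tendsto.congr' ?_ (tendsto_const_nhds (x := (0:ℝ)))
      filter_upwards [eventually_gt_atTop (0:ℝ)] with t ht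
      exact (LogPotentialAux.inner_zero ht).symm
    · have hpos : 0 < ‖x - u‖ := (norm_nonneg _).lt_of_ne' hu
      refine Tendsto.congr' ?_ (LogPotentialAux.tendsto_integral_g hpos)
      filter_upwards [eventually_gt_atTop (0:ℝ)] with t ht
      exact (LogPotentialAux.inner_eq hpos ht).symm
end
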